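/- arXiv:2108.01247 — 2 statements merged into one kernel-verified Lean document; each statement's English description precedes it below -/
import Mathlib

section
/- For every real t with 0 ≤ t ≤ 1, the trilogarithm satisfies Li₃(t) = (8/π) ∫₀¹ ((arcsin(√t · x))² · arccos x)/x dx, where the integral is taken over the real interval [0,1]. -/
open Real Filter MeasureTheory intervalIntegral

noncomputable def tc (n : ℕ) : ℝ := 4 ^ n / ((2 * n + 1) * Nat.centralBinom n)

lemma tcB_pos (n : ℕ) : (0:ℝ) < Nat.centralBinom n := by
  exact_mod_cast n.centralBinom_pos

lemma tc_pos (n : ℕ) : 0 < tc n := by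
  have := tcB_pos n
  unfold tc
  positivity

lemma tc_zero : tc 0 = 1 := by simp [tc, Nat.centralBinom]

lemma tcB_rec (n : ℕ) : ((n:ℝ) + 1) * Nat.centralBinom (n+1) = 2 * (2*n+1) * Nat.centralBinom n := by
  exact_mod_cast congrArg (Nat.cast : ℕ → ℝ) (Nat.succ_mul_centralBinom_succ n)

lemma tc_rec (n : ℕ) : (2*(n:ℝ)+3) * tc (n+1) = (2*n+2) * tc n := by
  have h := tcB_rec n
  have b1 := tcB_pos n
  have b2 := tcB_pos (n+1)
  unfold tc
  push_cast
  field_simp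
  linear_combination (-2)*(2*(n:ℝ)+3)*4^n*h

lemma tc_le_one (n : ℕ) : tc n ≤ 1 := by
  induction n with
  | zero => simp [tc_zero]
  | succ k ih =>
    have h := tc_rec k
    have hk := tc_pos k
    nlinarith [tc_pos (k+1)]

noncomputable def tS (v : ℝ) : ℝ := ∑' n : ℕ, tc n * v ^ (2*n+1)
noncomputable def tT (v : ℝ) : ℝ := ∑' n : ℕ, tc n * ((2*n+1) * v ^ (2*n))

lemma abs_tc_le (n : ℕ) : |tc n| ≤ 1 := by
  rw [abs_of_pos (tc_pos n)]; exact tc_le_one n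

lemma summable_aux {w : ℝ} (h0 : 0 ≤ w) (h1 : w < 1) :
    Summable (fun n : ℕ => (2*(n:ℝ)+3) * w ^ n) := by
  have hn : ‖w‖ < 1 := by rwa [Real.norm_eq_abs, abs_of_nonneg h0]
  have h2 : Summable (fun n : ℕ => (n:ℝ) ^ 1 * w ^ n) :=
    summable_pow_mul_geometric_of_norm_lt_one 1 hn
  have h3 : Summable (fun n : ℕ => w ^ n) := summable_geometric_of_lt_one h0 h1
  have := (h2.mul_left 2).add (h3.mul_left 3)
  apply this.congr
  intro n
  simp only [pow_one]
  ring

lemma summable_tS {v : ℝ} (hv : |v| < 1) : Summable (fun n : ℕ => tc n * v ^ (2*n+1)) := by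
  have h0 : (0:ℝ) ≤ |v| ^ 2 := by positivity
  have h1 : |v| ^ 2 < 1 := by nlinarith [abs_nonneg v]
  apply Summable.of_norm_bounded (summable_aux h0 h1)
  intro n
  have hb : |v| ^ (2*n+1) ≤ |v| ^ (2*n) := by
    apply pow_le_pow_of_le_one (abs_nonneg v) hv.le
    omega
  calc ‖tc n * v ^ (2*n+1)‖ = |tc n| * |v| ^ (2*n+1) := by
        rw [norm_mul, Real.norm_eq_abs, Real.norm_eq_abs, abs_pow]
    _ ≤ 1 * |v| ^ (2*n) := by
        apply mul_le_mul (abs_tc_le n) hb (by positivity) zero_le_one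
    _ ≤ (2*(n:ℝ)+3) * (|v| ^ 2) ^ n := by
        rw [← pow_mul]
        apply mul_le_mul_of_nonneg_right _ (by positivity)
        have : (0:ℝ) ≤ (n:ℝ) := n.cast_nonneg
        linarith

lemma summable_tT {v : ℝ} (hv : |v| < 1) :
    Summable (fun n : ℕ => tc n * ((2*(n:ℝ)+1) * v ^ (2*n))) := by
  have h0 : (0:ℝ) ≤ |v| ^ 2 := by positivity
  have h1 : |v| ^ 2 < 1 := by nlinarith [abs_nonneg v]
  apply Summable.of_norm_bounded (summable_aux h0 h1)
  intro n
  calc ‖tc n * ((2*(n:ℝ)+1) * v ^ (2*n))‖ = |tc n| * ((2*(n:ℝ)+1) * |v| ^ (2*n)) := by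
        rw [norm_mul, norm_mul, Real.norm_eq_abs, Real.norm_eq_abs, Real.norm_eq_abs, abs_pow]
        rw [abs_of_nonneg (by positivity : (0:ℝ) ≤ 2*(n:ℝ)+1)]
    _ ≤ 1 * ((2*(n:ℝ)+3) * (|v| ^ 2) ^ n) := by
        rw [← pow_mul]
        apply mul_le_mul (abs_tc_le n) _ (by positivity) zero_le_one
        apply mul_le_mul_of_nonneg_right (by linarith) (by positivity)
    _ = (2*(n:ℝ)+3) * (|v| ^ 2) ^ n := one_mul _

lemma hasDerivAt_tS {v : ℝ} (hv : |v| < 1) : HasDerivAt tS (tT v) v := by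
  set r : ℝ := (1 + |v|) / 2 with hr
  have hr0 : 0 ≤ r := by positivity
  have hvr : |v| < r := by rw [hr]; linarith
  have hr1 : r < 1 := by rw [hr]; linarith
  have hr2 : r ^ 2 < 1 := by nlinarith
  have hu : Summable (fun n : ℕ => (2*(n:ℝ)+3) * (r ^ 2) ^ n) :=
    summable_aux (by positivity) hr2
  have key := hasDerivAt_of_tendstoUniformlyOn (l := (atTop : Filter (Finset ℕ)))
    (s := Metric.ball (0:ℝ) r)
    (f := fun (s : Finset ℕ) x => ∑ n ∈ s, tc n * x ^ (2*n+1))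
    (f' := fun (s : Finset ℕ) x => ∑ n ∈ s, tc n * ((2*(n:ℝ)+1) * x ^ (2*n)))
    (g := tS) (g' := fun x => ∑' n : ℕ, tc n * ((2*(n:ℝ)+1) * x ^ (2*n)))
    Metric.isOpen_ball ?_ ?_ ?_ (by simpa [Real.dist_eq, abs_sub_comm] using hvr)
  · exact key
  · apply tendstoUniformlyOn_tsum hu
    intro n x hx
    have hxr : |x| ≤ r := by
      rw [Metric.mem_ball, Real.dist_eq, sub_zero] at hx
      exact hx.le
    calc ‖tc n * ((2*(n:ℝ)+1) * x ^ (2*n))‖ = |tc n| * ((2*(n:ℝ)+1) * |x| ^ (2*n)) := by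
          rw [norm_mul, norm_mul, Real.norm_eq_abs, Real.norm_eq_abs, Real.norm_eq_abs, abs_pow]
          rw [abs_of_nonneg (by positivity : (0:ℝ) ≤ 2*(n:ℝ)+1)]
      _ ≤ 1 * ((2*(n:ℝ)+3) * (r ^ 2) ^ n) := by
          rw [← pow_mul]
          apply mul_le_mul (abs_tc_le n) _ (by positivity) zero_le_one
          apply mul_le_mul (by linarith) (pow_le_pow_left₀ (abs_nonneg x) hxr _) (by positivity)
            (by positivity)
      _ = (2*(n:ℝ)+3) * (r ^ 2) ^ n := one_mul _
  · filter_upwards with s x _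
    apply HasDerivAt.fun_sum
    intro n _
    have h := (hasDerivAt_pow (2*n+1) x).const_mul (tc n)
    simpa [Nat.add_sub_cancel, mul_assoc] using h
  · intro x hx
    have hxr : |x| < 1 := by
      rw [Metric.mem_ball, Real.dist_eq, sub_zero] at hx
      exact hx.trans hr1
    exact (summable_tS hxr).hasSum

lemma tS_ode {v : ℝ} (hv : |v| < 1) : (1 - v^2) * tT v - v * tS v = 1 := by
  have h2 : Summable (fun n : ℕ => tc n * ((2*(n:ℝ)+1) * v ^ (2*n))) := summable_tT hv
  have h3 : Summable (fun n : ℕ => tc n * ((2*(n:ℝ)+1) * v ^ (2*n)) * v ^ 2) := h2.mul_right _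
  have h4 : Summable (fun n : ℕ => tc n * v ^ (2*n+1) * v) := (summable_tS hv).mul_right _
  have hT : tT v = 1 + ∑' n : ℕ, tc (n+1) * ((2*(n:ℝ)+3) * v ^ (2*n+2)) := by
    rw [tT, Summable.tsum_eq_zero_add h2]
    congr 1
    · norm_num [tc_zero]
    · apply tsum_congr; intro n; push_cast; ring_nf
  have hsplit : v^2 * tT v + v * tS v = ∑' n : ℕ, tc n * ((2*(n:ℝ)+2) * v ^ (2*n+2)) := by
    rw [tT, tS, ← tsum_mul_left, ← tsum_mul_left,
      ← Summable.tsum_add (h2.mul_left (v^2)) ((summable_tS hv).mul_left v)]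
    apply tsum_congr; intro n; ring
  have hshift : ∑' n : ℕ, tc (n+1) * ((2*(n:ℝ)+3) * v ^ (2*n+2))
      = ∑' n : ℕ, tc n * ((2*(n:ℝ)+2) * v ^ (2*n+2)) := by
    apply tsum_congr; intro n
    have h := tc_rec n
    linear_combination v ^ (2*n+2) * h
  have : (1 - v^2) * tT v - v * tS v = tT v - (v^2 * tT v + v * tS v) := by ring
  rw [this, hsplit, hT, hshift]
  ring

lemma hasDerivAt_sqrt_mul_tS {y : ℝ} (hy : |y| < 1) :
    HasDerivAt (fun v => Real.sqrt (1 - v^2) * tS v) (1 / Real.sqrt (1 - y^2)) y := by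
  have hy2 : 0 < 1 - y^2 := by nlinarith [abs_nonneg y, sq_abs y]
  have hsq : Real.sqrt (1 - y^2) > 0 := Real.sqrt_pos.2 hy2
  have h1 : HasDerivAt (fun v : ℝ => 1 - v^2) (-(2*y)) y := by
    simpa using ((hasDerivAt_pow 2 y).const_sub 1)
  have h2 : HasDerivAt (fun v : ℝ => Real.sqrt (1 - v^2))
      (1 / (2 * Real.sqrt (1 - y^2)) * (-(2*y))) y :=
    (Real.hasDerivAt_sqrt hy2.ne').comp y h1
  have h3 : HasDerivAt (fun v => Real.sqrt (1 - v^2) * tS v) _ y := h2.mul (hasDerivAt_tS hy)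
  convert h3 using 1
  have hss : Real.sqrt (1 - y^2) ^ 2 = 1 - y^2 := Real.sq_sqrt hy2.le
  have hode := tS_ode hy
  field_simp
  linear_combination -hode - (tT y)*hss

lemma arcsin_eq_sqrt_mul_tS {y : ℝ} (h0 : 0 ≤ y) (h1 : y < 1) :
    Real.arcsin y = Real.sqrt (1 - y^2) * tS y := by
  have key : ∀ v ∈ Set.uIcc (0:ℝ) y, |v| < 1 := by
    intro v hv
    rw [Set.uIcc_of_le h0] at hv
    rw [abs_lt]
    constructor <;> nlinarith [hv.1, hv.2]
  have hderiv : ∀ v ∈ Set.uIcc (0:ℝ) y,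
      HasDerivAt (fun v => Real.arcsin v - Real.sqrt (1 - v^2) * tS v) 0 v := by
    intro v hv
    have hv1 := key v hv
    have ha : HasDerivAt Real.arcsin (1 / Real.sqrt (1 - v^2)) v :=
      Real.hasDerivAt_arcsin (by rw [abs_lt] at hv1; linarith [hv1.1])
        (by rw [abs_lt] at hv1; linarith [hv1.2])
    simpa using (show HasDerivAt (fun v => Real.arcsin v - Real.sqrt (1 - v^2) * tS v) _ v from
      ha.sub (hasDerivAt_sqrt_mul_tS hv1))
  have hint : IntervalIntegrable (fun _ : ℝ => (0:ℝ)) volume 0 y :=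
    intervalIntegrable_const
  have := intervalIntegral.integral_eq_sub_of_hasDerivAt hderiv hint
  simp only [intervalIntegral.integral_zero] at this
  have h00 : Real.arcsin 0 - Real.sqrt (1 - 0^2) * tS 0 = 0 := by
    have : tS 0 = 0 := by
      rw [tS]
      convert tsum_zero with n
      simp
    simp [this]
  have := this.symm
  rw [h00] at this
  linarith [this]

lemma integral_tS {y : ℝ} (h0 : 0 ≤ y) (h1 : y < 1) :
    ∫ v in (0:ℝ)..y, tS v = ∑' n : ℕ, tc n * (y^(2*n+2) / (2*(n:ℝ)+2)) := by
  have hInt : ∀ n : ℕ, IntegrableOn (fun v : ℝ => tc n * v^(2*n+1)) (Set.Ioc 0 y) volume :=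
    fun n => (Continuous.integrableOn_Ioc (by continuity))
  have hval : ∀ n : ℕ, ∫ v in Set.Ioc (0:ℝ) y, tc n * v^(2*n+1)
      = tc n * (y^(2*n+2) / (2*(n:ℝ)+2)) := by
    intro n
    rw [← intervalIntegral.integral_of_le h0, intervalIntegral.integral_const_mul,
      integral_pow]
    push_cast
    ring
  have hnorm : ∀ n : ℕ, (∫ v in Set.Ioc (0:ℝ) y, ‖tc n * v^(2*n+1)‖)
      ≤ y^(2*n+1) * y := by
    intro n
    have hb : ∀ v ∈ Set.Ioc (0:ℝ) y, ‖tc n * v^(2*n+1)‖ ≤ y^(2*n+1) := by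
      intro v hv
      rw [norm_mul, Real.norm_eq_abs, Real.norm_eq_abs, abs_pow,
        abs_of_nonneg hv.1.le]
      calc |tc n| * v^(2*n+1) ≤ 1 * y^(2*n+1) := by
            apply mul_le_mul (abs_tc_le n) (pow_le_pow_left₀ hv.1.le hv.2 _)
              (pow_nonneg hv.1.le _) zero_le_one
        _ = y^(2*n+1) := one_mul _
    calc (∫ v in Set.Ioc (0:ℝ) y, ‖tc n * v^(2*n+1)‖)
        ≤ ∫ _ in Set.Ioc (0:ℝ) y, y^(2*n+1) := by
          apply MeasureTheory.setIntegral_mono_on (hInt n).norm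
            (integrableOn_const measure_Ioc_lt_top.ne)
            measurableSet_Ioc hb
      _ = y^(2*n+1) * y := by
          rw [MeasureTheory.setIntegral_const, Real.volume_real_Ioc, smul_eq_mul]
          rw [max_eq_left (by linarith)]
          ring
  have hsum : Summable (fun n : ℕ => ∫ v in Set.Ioc (0:ℝ) y, ‖tc n * v^(2*n+1)‖) := by
    apply Summable.of_nonneg_of_le
      (fun n => MeasureTheory.integral_nonneg (fun v => norm_nonneg _)) hnorm
    have : Summable (fun n : ℕ => (y^2)^n * (y^2)) :=
      (summable_geometric_of_lt_one (by positivity) (by nlinarith)).mul_right _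
    apply this.congr
    intro n
    rw [← pow_mul]
    ring
  have key := MeasureTheory.integral_tsum_of_summable_integral_norm
    (F := fun (n : ℕ) (v : ℝ) => tc n * v^(2*n+1)) (μ := volume.restrict (Set.Ioc 0 y))
    hInt hsum
  rw [intervalIntegral.integral_of_le h0]
  simp only [tS]
  rw [← key]
  exact tsum_congr hval

lemma arcsin_sq_eq {y : ℝ} (h0 : 0 ≤ y) (h1 : y < 1) :
    Real.arcsin y ^ 2 = ∑' n : ℕ, tc n / ((n:ℝ)+1) * y^(2*n+2) := by
  have key : ∀ v ∈ Set.uIcc (0:ℝ) y, |v| < 1 := by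
    intro v hv
    rw [Set.uIcc_of_le h0] at hv
    rw [abs_lt]
    constructor <;> nlinarith [hv.1, hv.2]
  have hsqrt_pos : ∀ v ∈ Set.uIcc (0:ℝ) y, 0 < Real.sqrt (1 - v^2) := by
    intro v hv
    have := key v hv
    apply Real.sqrt_pos.2
    nlinarith [sq_abs v, abs_nonneg v]
  have hderiv : ∀ v ∈ Set.uIcc (0:ℝ) y,
      HasDerivAt (fun v => Real.arcsin v ^ 2) (2 * tS v) v := by
    intro v hv
    have hv1 := key v hv
    rw [abs_lt] at hv1
    have ha : HasDerivAt Real.arcsin (1 / Real.sqrt (1 - v^2)) v :=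
      Real.hasDerivAt_arcsin (by linarith [hv1.1]) (by linarith [hv1.2])
    have h2 : HasDerivAt (fun v => Real.arcsin v ^ 2) _ v := ha.pow 2
    convert h2 using 1
    have harc : Real.arcsin v = Real.sqrt (1 - v^2) * tS v := by
      rcases le_or_gt 0 v with hc | hc
      · exact arcsin_eq_sqrt_mul_tS hc hv1.2
      · have h0v : 0 ≤ -v := by linarith
        have := arcsin_eq_sqrt_mul_tS h0v (by linarith [hv1.1])
        have hodd : tS (-v) = - tS v := by
          rw [tS, tS, ← tsum_neg]
          apply tsum_congr
          intro n
          rw [Odd.neg_pow ⟨n, by ring⟩]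
          ring
        rw [Real.arcsin_neg, hodd] at this
        have : Real.arcsin v = Real.sqrt (1 - v^2) * tS v := by
          have hsq : Real.sqrt (1 - (-v)^2) = Real.sqrt (1 - v^2) := by ring_nf
          rw [hsq] at this
          linarith [this]
        exact this
    have hs := hsqrt_pos v hv
    rw [harc]
    field_simp
    ring
  have hcont : ContinuousOn (fun v => 2 * tS v) (Set.uIcc 0 y) := by
    have h2 : ContinuousOn (fun v : ℝ => 2 * (Real.arcsin v / Real.sqrt (1 - v^2)))
        (Set.uIcc 0 y) := by
      apply ContinuousOn.mul continuousOn_const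
      apply ContinuousOn.div
      · exact Real.continuous_arcsin.continuousOn
      · exact ((continuous_const.sub (continuous_pow 2)).sqrt).continuousOn
      · intro v hv
        exact (hsqrt_pos v hv).ne'
    apply h2.congr
    intro v hv
    have harc : Real.arcsin v = Real.sqrt (1 - v^2) * tS v := by
      rcases le_or_gt 0 v with hc | hc
      · exact arcsin_eq_sqrt_mul_tS hc (by have := key v hv; rw [abs_lt] at this; exact this.2)
      · exfalso
        rw [Set.uIcc_of_le h0] at hv
        linarith [hv.1]
    show 2 * tS v = 2 * (Real.arcsin v / Real.sqrt (1 - v^2))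
    rw [harc]
    have hne := (hsqrt_pos v hv).ne'
    field_simp
  have hint : IntervalIntegrable (fun v => 2 * tS v) volume 0 y := by
    apply ContinuousOn.intervalIntegrable hcont
  have hftc := intervalIntegral.integral_eq_sub_of_hasDerivAt hderiv hint
  rw [intervalIntegral.integral_const_mul, integral_tS h0 h1] at hftc
  rw [Real.arcsin_zero] at hftc
  rw [← sub_zero (Real.arcsin y ^ 2)]
  have : (0:ℝ)^2 = 0 := by norm_num
  rw [← this, ← hftc, ← tsum_mul_left]
  apply tsum_congr
  intro n
  have : (2*(n:ℝ)+2) ≠ 0 := by positivity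
  field_simp

lemma wallis (m : ℕ) : ∫ θ in (0:ℝ)..(π/2), Real.sin θ ^ (2*m)
    = π/2 * ((Nat.centralBinom m : ℝ) / 4^m) := by
  induction m with
  | zero => simp [Nat.centralBinom]
  | succ k ih =>
    have h2 : 2*(k+1) = 2*k + 2 := by ring
    rw [h2, integral_sin_pow]
    rw [ih]
    have hrec := tcB_rec k
    have hB := tcB_pos k
    have hB1 := tcB_pos (k+1)
    simp only [Real.sin_zero, Real.cos_pi_div_two, Real.sin_pi_div_two]
    push_cast
    rw [zero_pow (by omega), pow_succ]
    field_simp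
    linear_combination (-2*π*(4:ℝ)^k) * hrec

lemma integral_pow_mul_arccos (n : ℕ) : ∫ x in (0:ℝ)..1, x^(2*n+1) * Real.arccos x
    = (π/2) * ((Nat.centralBinom (n+1) : ℝ) / 4^(n+1)) / (2*(n:ℝ)+2) := by
  have hsub := intervalIntegral.integral_comp_smul_deriv
    (f := Real.sin) (f' := Real.cos) (g := fun x => x^(2*n+1) * Real.arccos x)
    (a := 0) (b := π/2)
    (fun θ _ => Real.hasDerivAt_sin θ) Real.continuous_cos.continuousOn
    (by continuity)
  rw [Real.sin_zero, Real.sin_pi_div_two] at hsub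
  simp only [Function.comp_apply, smul_eq_mul] at hsub
  rw [← hsub]
  have hcongr : ∫ θ in (0:ℝ)..(π/2), Real.cos θ * (Real.sin θ ^(2*n+1) * Real.arccos (Real.sin θ))
      = ∫ θ in (0:ℝ)..(π/2), ((π/2) * (Real.sin θ ^(2*n+1) * Real.cos θ)
          - θ * (Real.sin θ ^(2*n+1) * Real.cos θ)) := by
    apply intervalIntegral.integral_congr
    intro θ hθ
    rw [Set.uIcc_of_le (by positivity : (0:ℝ) ≤ π/2)] at hθ
    have harc : Real.arccos (Real.sin θ) = π/2 - θ := by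
      rw [Real.arccos_eq_pi_div_two_sub_arcsin, Real.arcsin_sin (by linarith [hθ.1, Real.pi_pos])
        (by linarith [hθ.2])]
    simp only []
    rw [harc]
    ring
  rw [hcongr]
  have hc1 : Continuous fun θ : ℝ => Real.sin θ ^(2*n+1) * Real.cos θ := by continuity
  have hc2 : Continuous fun θ : ℝ => θ * (Real.sin θ ^(2*n+1) * Real.cos θ) :=
    continuous_id.mul hc1
  rw [intervalIntegral.integral_sub (((show Continuous fun θ : ℝ => (π/2) * (Real.sin θ ^(2*n+1) * Real.cos θ) from continuous_const.mul hc1)).intervalIntegrable _ _)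
    (hc2.intervalIntegrable _ _)]
  have hA : ∫ θ in (0:ℝ)..(π/2), (π/2) * (Real.sin θ ^(2*n+1) * Real.cos θ)
      = (π/2) * (1 / (2*(n:ℝ)+2)) := by
    rw [intervalIntegral.integral_const_mul]
    congr 1
    have hftc : ∀ θ ∈ Set.uIcc (0:ℝ) (π/2),
        HasDerivAt (fun θ => Real.sin θ ^(2*n+2) / (2*(n:ℝ)+2))
          (Real.sin θ ^(2*n+1) * Real.cos θ) θ := by
      intro θ _
      have h : HasDerivAt (fun θ => Real.sin θ ^(2*n+2) / (2*(n:ℝ)+2)) _ θ :=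
        ((Real.hasDerivAt_sin θ).pow (2*n+2)).div_const (2*(n:ℝ)+2)
      convert h using 1
      push_cast
      have h2 : (2*(n:ℝ)+2) ≠ 0 := by positivity
      field_simp
    rw [intervalIntegral.integral_eq_sub_of_hasDerivAt hftc (hc1.intervalIntegrable _ _)]
    rw [Real.sin_pi_div_two, Real.sin_zero, one_pow, zero_pow (by omega)]
    ring
  have hB : ∫ θ in (0:ℝ)..(π/2), θ * (Real.sin θ ^(2*n+1) * Real.cos θ)
      = (π/2) * (1/(2*(n:ℝ)+2)) - (π/2 * ((Nat.centralBinom (n+1) : ℝ) / 4^(n+1))) / (2*(n:ℝ)+2) := by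
    have hu : ∀ θ ∈ Set.uIcc (0:ℝ) (π/2), HasDerivAt (fun θ : ℝ => θ) 1 θ :=
      fun θ _ => hasDerivAt_id θ
    have hv : ∀ θ ∈ Set.uIcc (0:ℝ) (π/2),
        HasDerivAt (fun θ => Real.sin θ ^(2*n+2) / (2*(n:ℝ)+2))
          (Real.sin θ ^(2*n+1) * Real.cos θ) θ := by
      intro θ _
      have h : HasDerivAt (fun θ => Real.sin θ ^(2*n+2) / (2*(n:ℝ)+2)) _ θ :=
        ((Real.hasDerivAt_sin θ).pow (2*n+2)).div_const (2*(n:ℝ)+2)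
      convert h using 1
      push_cast
      have h2 : (2*(n:ℝ)+2) ≠ 0 := by positivity
      field_simp
    have hparts := intervalIntegral.integral_mul_deriv_eq_deriv_mul hu hv
      (intervalIntegrable_const) (hc1.intervalIntegrable _ _)
    rw [hparts]
    have : ∫ θ in (0:ℝ)..(π/2), 1 * (Real.sin θ ^(2*n+2) / (2*(n:ℝ)+2))
        = (π/2 * ((Nat.centralBinom (n+1) : ℝ) / 4^(n+1))) / (2*(n:ℝ)+2) := by
      have h2 : 2*(n+1) = 2*n+2 := by ring
      rw [← wallis (n+1), h2]
      rw [← intervalIntegral.integral_div]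
      apply intervalIntegral.integral_congr
      intro θ _
      simp
    rw [this]
    rw [Real.sin_pi_div_two, Real.sin_zero, one_pow, zero_pow (by omega)]
    ring
  rw [hA, hB]
  ring


lemma coeff_id (n : ℕ) : tc n / ((n:ℝ)+1) * ((π/2) * ((Nat.centralBinom (n+1) : ℝ) / 4^(n+1)) / (2*(n:ℝ)+2))
    = π / (8*((n:ℝ)+1)^3) := by
  have hrec := tcB_rec n
  have hB := tcB_pos n
  have hB1 := tcB_pos (n+1)
  rw [tc]
  push_cast
  rw [pow_succ]
  field_simp
  linear_combination 8 * hrec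

open Real in
/-- Local integral representation of the trilogarithm `Li₃(t) = ∑_{n=1}^∞ tⁿ/n³`. -/
theorem trilog_eq_integral (t : ℝ) (ht0 : 0 ≤ t) (ht1 : t ≤ 1) :
    ∑' n : ℕ, t ^ (n + 1) / (n + 1 : ℝ) ^ 3 =
      (8 / π) * ∫ x in (0:ℝ)..1, (arcsin (Real.sqrt t * x)) ^ 2 * arccos x / x := by
  set s : ℝ := Real.sqrt t with hs
  have hs0 : 0 ≤ s := Real.sqrt_nonneg t
  have hs1 : s ≤ 1 := by
    rw [hs, show (1:ℝ) = Real.sqrt 1 by simp]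
    exact Real.sqrt_le_sqrt ht1
  have hs2 : s^2 = t := Real.sq_sqrt ht0
  set F : ℕ → ℝ → ℝ := fun n x => (tc n / ((n:ℝ)+1) * t^(n+1)) * (x^(2*n+1) * Real.arccos x)
    with hF
  -- pointwise identity on Ioo 0 1
  have hpt : ∀ x ∈ Set.Ioo (0:ℝ) 1, arcsin (s * x) ^ 2 * arccos x / x = ∑' n : ℕ, F n x := by
    intro x hx
    obtain ⟨hx0, hx1⟩ := hx
    have hy0 : 0 ≤ s * x := by positivity
    have hy1 : s * x < 1 := by
      calc s * x ≤ 1 * x := by apply mul_le_mul_of_nonneg_right hs1 hx0.le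
        _ = x := one_mul x
        _ < 1 := hx1
    rw [arcsin_sq_eq hy0 hy1, mul_div_assoc, ← tsum_mul_right]
    apply tsum_congr
    intro n
    have hp : (s*x)^(2*n+2) = t^(n+1) * x^(2*n+2) := by
      rw [mul_pow, show 2*n+2 = 2*(n+1) from by ring, pow_mul, hs2]
    rw [hF]
    simp only []
    rw [hp]
    rw [show 2*n+2 = (2*n+1)+1 from rfl, pow_succ]
    field_simp
    ring
  have hInt : ∀ n : ℕ, IntegrableOn (F n) (Set.Ioo 0 1) volume := by
    intro n
    have hc : Continuous (F n) := by
      rw [hF]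
      exact continuous_const.mul ((continuous_pow _).mul Real.continuous_arccos)
    exact (hc.integrableOn_Icc).mono_set Set.Ioo_subset_Icc_self
  have hval : ∀ n : ℕ, ∫ x in Set.Ioo (0:ℝ) 1, F n x = π / (8*((n:ℝ)+1)^3) * t^(n+1) := by
    intro n
    rw [← MeasureTheory.integral_Ioc_eq_integral_Ioo, ← intervalIntegral.integral_of_le zero_le_one]
    rw [hF]
    simp only []
    rw [intervalIntegral.integral_const_mul, integral_pow_mul_arccos n]
    rw [← coeff_id n]
    ring
  have hnonneg : ∀ n : ℕ, ∀ x ∈ Set.Ioo (0:ℝ) 1, 0 ≤ F n x := by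
    intro n x hx
    rw [hF]
    have := Real.arccos_nonneg x
    have := (tc_pos n).le
    have := hx.1.le
    positivity
  have hnormval : ∀ n : ℕ, (∫ x in Set.Ioo (0:ℝ) 1, ‖F n x‖) = π / (8*((n:ℝ)+1)^3) * t^(n+1) := by
    intro n
    rw [← hval n]
    apply MeasureTheory.setIntegral_congr_fun measurableSet_Ioo
    intro x hx
    exact Real.norm_of_nonneg (hnonneg n x hx)
  have hsummable : Summable (fun n : ℕ => π / (8*((n:ℝ)+1)^3) * t^(n+1)) := by
    have h3 : Summable (fun n : ℕ => 1 / ((n:ℝ)+1)^3) := by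
      have := (Real.summable_one_div_nat_pow (p := 3)).2 (by norm_num)
      have h4 := (summable_nat_add_iff (f := fun n : ℕ => 1 / ((n:ℕ):ℝ)^3) 1).2 this
      apply h4.congr
      intro n
      push_cast
      ring
    apply Summable.of_nonneg_of_le _ _ (h3.mul_left (π/8))
    · intro n
      have := Real.pi_pos.le
      positivity
    · intro n
      have hp3 : (0:ℝ) < ((n:ℝ)+1)^3 := by positivity
      have htp : t^(n+1) ≤ 1 := pow_le_one₀ ht0 ht1
      have h1 : π / (8*((n:ℝ)+1)^3) * t^(n+1) ≤ π / (8*((n:ℝ)+1)^3) * 1 :=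
        mul_le_mul_of_nonneg_left htp (by positivity)
      rw [mul_one] at h1
      refine h1.trans_eq ?_
      field_simp
  have hsum : Summable (fun n : ℕ => ∫ x in Set.Ioo (0:ℝ) 1, ‖F n x‖) := by
    apply hsummable.congr
    intro n
    rw [hnormval n]
  have hkey := MeasureTheory.integral_tsum_of_summable_integral_norm
    (μ := volume.restrict (Set.Ioo 0 1)) hInt hsum
  have hIeq : ∫ x in (0:ℝ)..1, arcsin (s * x) ^ 2 * arccos x / x
      = ∑' n : ℕ, π / (8*((n:ℝ)+1)^3) * t^(n+1) := by
    rw [intervalIntegral.integral_of_le zero_le_one, MeasureTheory.integral_Ioc_eq_integral_Ioo]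
    rw [MeasureTheory.setIntegral_congr_fun measurableSet_Ioo hpt, ← hkey]
    exact tsum_congr hval
  rw [hIeq, ← tsum_mul_left]
  apply tsum_congr
  intro n
  have hπ : π ≠ 0 := Real.pi_ne_zero
  field_simp
end

section
/- (π/8) · ∑_{n=1}^∞ (−1)^{n−1}/n³ = ∫₀¹ ((arsinh x)² · arccos x)/x dx, where the integral is taken over the real interval [0,1]. -/
open Real Set MeasureTheory

noncomputable def Wal (n : ℕ) : ℝ := ∏ i ∈ Finset.range n, (2*(i:ℝ)+1)/(2*i+2)

lemma Wal_pos (n : ℕ) : 0 < Wal n := by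
  apply Finset.prod_pos; intro i _; positivity

lemma Wal_succ (n : ℕ) : Wal (n+1) = Wal n * ((2*n+1)/(2*n+2)) := by
  rw [Wal, Finset.prod_range_succ]; rfl

lemma Wal_le_one (n : ℕ) : Wal n ≤ 1 := by
  induction n with
  | zero => simp [Wal]
  | succ k ih =>
    rw [Wal_succ]
    have h1 : ((2*(k:ℝ)+1)/(2*k+2)) ≤ 1 := by
      rw [div_le_one (by positivity)]; linarith
    nlinarith [Wal_pos k]

lemma one_le_Wal_mul (n : ℕ) : 1 ≤ Wal n * (2*n+1) := by
  induction n with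
  | zero => simp [Wal]
  | succ k ih =>
    rw [Wal_succ]
    have h : (0:ℝ) < 2*k+2 := by positivity
    push_cast
    rw [mul_div_assoc'] at *
    rw [div_mul_eq_mul_div, le_div_iff₀ h]
    nlinarith [Wal_pos k]

noncomputable def cc (k : ℕ) : ℝ := (-1)^k / (2*(k+1)^2 * Wal (k+1))
noncomputable def dd (k : ℕ) : ℝ := (-1)^k / (2*(k+1) * Wal (k+1))

lemma dd_zero : dd 0 = 1 := by
  simp [dd, Wal_succ, Wal]

lemma abs_dd_le (k : ℕ) : |dd k| ≤ 2 := by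
  have hW := Wal_pos (k+1)
  have h1 := one_le_Wal_mul (k+1)
  rw [dd, abs_div, abs_pow, abs_neg, abs_one, one_pow]
  rw [abs_of_pos (by positivity)]
  rw [div_le_iff₀ (by positivity)]
  push_cast at h1 ⊢
  nlinarith
lemma abs_cc_le (k : ℕ) : |cc k| ≤ 2 := by
  have hW := Wal_pos (k+1)
  have h1 := one_le_Wal_mul (k+1)
  rw [cc, abs_div, abs_pow, abs_neg, abs_one, one_pow]
  rw [abs_of_pos (by positivity)]
  rw [div_le_iff₀ (by positivity)]
  push_cast at h1 ⊢
  nlinarith [sq_nonneg ((k:ℝ)+1), Wal_pos (k+1)]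

lemma dd_rec (k : ℕ) : (2*(k:ℝ)+3) * dd (k+1) = -(2*k+2) * dd k := by
  have h1 : Wal (k+1+1) = Wal (k+1) * ((2*((k+1):ℕ)+1)/(2*((k+1):ℕ)+2)) := Wal_succ (k+1)
  have hW := Wal_pos (k+1)
  rw [dd, dd, h1]
  push_cast
  rw [pow_succ]
  field_simp
  ring

lemma cc_dd (k : ℕ) : cc k * (2*(k:ℝ)+2) = 2 * dd k := by
  have hW := Wal_pos (k+1)
  rw [cc, dd]
  push_cast
  field_simp

lemma sum_geom_lin {r : ℝ} (hr : |r| < 1) : Summable (fun k : ℕ => 2*((2*(k:ℝ)+4) * r^k)) := by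
  have h1 : Summable (fun k : ℕ => (k:ℝ)^1 * r^k) :=
    summable_pow_mul_geometric_of_norm_lt_one 1 (by rwa [Real.norm_eq_abs])
  have h2 : Summable (fun k : ℕ => r^k) := summable_geometric_of_abs_lt_one hr
  have := ((h1.mul_left 4).add (h2.mul_left 8))
  refine this.congr fun k => ?_
  push_cast; ring

noncomputable def PP (x : ℝ) : ℝ := ∑' k, dd k * x^(2*k+1)
noncomputable def SS (x : ℝ) : ℝ := ∑' k, cc k * x^(2*k+2)

lemma bound_dd {y r : ℝ} (hy : |y| ≤ r) (k : ℕ) :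
    |dd k * ((2*(k:ℝ)+1) * y^(2*k))| ≤ 2*((2*(k:ℝ)+4) * (r^2)^k) := by
  have h0 : (0:ℝ) ≤ r := le_trans (abs_nonneg y) hy
  have h1 : |y|^(2*k) ≤ (r^2)^k := by
    rw [← pow_mul]
    exact pow_le_pow_left₀ (abs_nonneg y) hy _
  have h2 := abs_dd_le k
  rw [abs_mul, abs_mul, abs_pow, abs_of_pos (show (0:ℝ) < 2*k+1 by positivity)]
  exact mul_le_mul h2 (mul_le_mul (by linarith) h1 (pow_nonneg (abs_nonneg y) _)
    (by positivity)) (by positivity) (by norm_num)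

lemma bound_cc {y r : ℝ} (hy : |y| ≤ r) (hr : r ≤ 1) (k : ℕ) :
    |cc k * ((2*(k:ℝ)+2) * y^(2*k+1))| ≤ 2*((2*(k:ℝ)+4) * (r^2)^k) := by
  have h0 : (0:ℝ) ≤ r := le_trans (abs_nonneg y) hy
  have h1 : |y|^(2*k+1) ≤ (r^2)^k := by
    calc |y|^(2*k+1) ≤ r^(2*k+1) := pow_le_pow_left₀ (abs_nonneg y) hy _
    _ ≤ r^(2*k) := pow_le_pow_of_le_one h0 hr (by omega)
    _ = (r^2)^k := (pow_mul r 2 k)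
  have h2 := abs_cc_le k
  rw [abs_mul, abs_mul, abs_pow, abs_of_pos (show (0:ℝ) < 2*k+2 by positivity)]
  exact mul_le_mul h2 (mul_le_mul (by linarith) h1 (pow_nonneg (abs_nonneg y) _)
    (by positivity)) (by positivity) (by norm_num)

lemma r_facts {x : ℝ} (hx : x ∈ Ioo (-1:ℝ) 1) :
    |x| < (1+|x|)/2 ∧ (1+|x|)/2 < 1 ∧ |(((1+|x|)/2)^2)| < 1 := by
  have h : |x| < 1 := abs_lt.mpr ⟨hx.1, hx.2⟩
  have h0 : (0:ℝ) ≤ |x| := abs_nonneg x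
  refine ⟨by linarith, by linarith, ?_⟩
  rw [abs_of_nonneg (by positivity)]
  nlinarith

lemma hasDerivAt_term_dd (k : ℕ) (y : ℝ) :
    HasDerivAt (fun y : ℝ => dd k * y^(2*k+1)) (dd k * ((2*(k:ℝ)+1) * y^(2*k))) y := by
  have h := (hasDerivAt_pow (2*k+1) y).const_mul (dd k)
  refine h.congr_deriv (Eq.symm ?_)
  push_cast
  norm_num

lemma hasDerivAt_term_cc (k : ℕ) (y : ℝ) :
    HasDerivAt (fun y : ℝ => cc k * y^(2*k+2)) (cc k * ((2*(k:ℝ)+2) * y^(2*k+1))) y := by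
  have h := (hasDerivAt_pow (2*k+2) y).const_mul (cc k)
  refine h.congr_deriv (Eq.symm ?_)
  push_cast
  norm_num

lemma hasDerivAt_PP {x : ℝ} (hx : x ∈ Ioo (-1:ℝ) 1) :
    HasDerivAt PP (∑' k, dd k * ((2*(k:ℝ)+1) * x^(2*k))) x := by
  obtain ⟨hxr, hr1, hr2⟩ := r_facts hx
  set r := (1+|x|)/2 with hrdef
  have hr0 : (0:ℝ) < r := by rw [hrdef]; positivity
  show HasDerivAt (fun z => ∑' k, dd k * z^(2*k+1)) _ x
  exact hasDerivAt_tsum_of_isPreconnected (sum_geom_lin hr2) (isOpen_Ioo (a := -r) (b := r))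
      (isPreconnected_Ioo)
      (fun k y _ => hasDerivAt_term_dd k y)
      (fun k y hy => bound_dd (le_of_lt (abs_lt.mpr ⟨hy.1, hy.2⟩)) k)
      (show (0:ℝ) ∈ Ioo (-r) r from ⟨by linarith, hr0⟩)
      (Summable.congr summable_zero (fun k => by simp))
      (abs_lt.mp hxr)

lemma hasDerivAt_SS {x : ℝ} (hx : x ∈ Ioo (-1:ℝ) 1) :
    HasDerivAt SS (∑' k, cc k * ((2*(k:ℝ)+2) * x^(2*k+1))) x := by
  obtain ⟨hxr, hr1, hr2⟩ := r_facts hx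
  set r := (1+|x|)/2 with hrdef
  have hr0 : (0:ℝ) < r := by rw [hrdef]; positivity
  show HasDerivAt (fun z => ∑' k, cc k * z^(2*k+2)) _ x
  exact hasDerivAt_tsum_of_isPreconnected (sum_geom_lin hr2) (isOpen_Ioo (a := -r) (b := r))
      (isPreconnected_Ioo)
      (fun k y _ => hasDerivAt_term_cc k y)
      (fun k y hy => bound_cc (le_of_lt (abs_lt.mpr ⟨hy.1, hy.2⟩)) (le_of_lt hr1) k)
      (show (0:ℝ) ∈ Ioo (-r) r from ⟨by linarith, hr0⟩)
      (Summable.congr summable_zero (fun k => by simp))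
      (abs_lt.mp hxr)

lemma summable_master {x : ℝ} (hx : |x| < 1) {f : ℕ → ℝ}
    (hf : ∀ k, |f k| ≤ 2*(2*(k:ℝ)+4)) (m : ℕ) :
    Summable (fun k => f k * x^(2*k+m)) := by
  have h2 : |(|x|^2)| < 1 := by
    rw [abs_of_nonneg (by positivity)]
    nlinarith [abs_nonneg x]
  refine Summable.of_norm_bounded (sum_geom_lin h2) (fun k => ?_)
  rw [Real.norm_eq_abs, abs_mul, abs_pow]
  have hxm : |x|^(2*k+m) ≤ (|x|^2)^k := by
    calc |x|^(2*k+m) ≤ |x|^(2*k) :=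
          pow_le_pow_of_le_one (abs_nonneg x) (le_of_lt hx) (by omega)
    _ = (|x|^2)^k := pow_mul _ 2 k
  calc |f k| * |x|^(2*k+m) ≤ (2*(2*(k:ℝ)+4)) * (|x|^2)^k :=
        mul_le_mul (hf k) hxm (by positivity) (by positivity)
  _ = 2*((2*(k:ℝ)+4) * (|x|^2)^k) := by ring

lemma hdd' : ∀ k:ℕ, |dd k * (2*(k:ℝ)+1)| ≤ 2*(2*(k:ℝ)+4) := fun k => by
  rw [abs_mul, abs_of_pos (show (0:ℝ) < 2*(k:ℝ)+1 by positivity)]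
  nlinarith [abs_dd_le k, abs_nonneg (dd k)]

lemma key {x : ℝ} (hx : |x| < 1) :
    x * PP x + (1+x^2) * (∑' k, dd k * ((2*(k:ℝ)+1) * x^(2*k))) = 1 := by
  have hB : Summable (fun k => dd k * ((2*(k:ℝ)+1) * x^(2*k))) := by
    refine (summable_master hx hdd' 0).congr fun k => ?_
    rw [Nat.add_zero]; ring
  have hA : Summable (fun k => dd k * x^(2*k+2)) :=
    summable_master hx (fun k => by nlinarith [abs_dd_le k, (Nat.cast_nonneg k : (0:ℝ) ≤ k)]) 2
  have hB2 : Summable (fun k => dd k * ((2*(k:ℝ)+1) * x^(2*k+2))) :=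
    (summable_master hx hdd' 2).congr fun k => by ring
  have hshift : Summable (fun k => dd (k+1) * ((2*(((k:ℕ)+1):ℝ)+1) * x^(2*(k+1)))) := by
    have := (summable_nat_add_iff 1).mpr hB
    refine this.congr fun k => ?_
    push_cast; ring
  have e1 : x * PP x = ∑' k, dd k * x^(2*k+2) := by
    rw [PP, ← tsum_mul_left]
    exact tsum_congr fun k => by ring
  have e2 : x^2 * (∑' k, dd k * ((2*(k:ℝ)+1) * x^(2*k))) =
      ∑' k, dd k * ((2*(k:ℝ)+1) * x^(2*k+2)) := by
    rw [← tsum_mul_left]; exact tsum_congr fun k => by ring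
  have e3 : (∑' k, dd k * ((2*(k:ℝ)+1) * x^(2*k))) =
      1 + ∑' k, dd (k+1) * ((2*(((k:ℕ)+1):ℝ)+1) * x^(2*(k+1))) := by
    rw [hB.tsum_eq_zero_add]
    congr 1
    · simp [dd_zero]
    · exact tsum_congr fun k => by push_cast; ring
  have expand : (1+x^2) * (∑' k, dd k * ((2*(k:ℝ)+1) * x^(2*k))) =
      (∑' k, dd k * ((2*(k:ℝ)+1) * x^(2*k))) + ∑' k, dd k * ((2*(k:ℝ)+1) * x^(2*k+2)) := by
    rw [add_mul, one_mul, e2]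
  have hz : (∑' k, dd k * x^(2*k+2)) + ((∑' k, dd (k+1) * ((2*(((k:ℕ)+1):ℝ)+1) * x^(2*(k+1)))) +
      (∑' k, dd k * ((2*(k:ℝ)+1) * x^(2*k+2)))) = 0 := by
    rw [← hshift.tsum_add hB2, ← hA.tsum_add (hshift.add hB2)]
    rw [show (0:ℝ) = ∑' (_:ℕ), (0:ℝ) from tsum_zero.symm]
    refine tsum_congr fun k => ?_
    have hr := dd_rec k
    push_cast
    linear_combination x^(2*k+2) * hr
  rw [e1, expand, e3]
  linarith

lemma PP_zero : PP 0 = 0 := by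
  have : ∀ k : ℕ, dd k * (0:ℝ)^(2*k+1) = 0 := fun k => by simp
  simp [PP, this]

lemma SS_zero : SS 0 = 0 := by
  have : ∀ k : ℕ, cc k * (0:ℝ)^(2*k+2) = 0 := fun k => by simp
  simp [SS, this]

lemma hasDerivAt_sqrtq (y : ℝ) :
    HasDerivAt (fun z : ℝ => Real.sqrt (1+z^2)) (y / Real.sqrt (1+y^2)) y := by
  have hin : HasDerivAt (fun z : ℝ => 1+z^2) (2*y) y := by
    have := (hasDerivAt_pow 2 y).const_add 1
    simpa using this
  have := hin.sqrt (by positivity)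
  convert this using 1
  rw [eq_div_iff (by positivity)]
  field_simp

lemma deriv_zero_step1 {y : ℝ} (hy : y ∈ Ioo (-1:ℝ) 1) :
    HasDerivAt (fun z => Real.sqrt (1+z^2) * PP z - arsinh z) 0 y := by
  have hs := hasDerivAt_sqrtq y
  have hp := hasDerivAt_PP hy
  have ha := Real.hasDerivAt_arsinh y
  have h := (hs.mul hp).sub ha
  refine h.congr_deriv (Eq.symm ?_)
  have hk := key (abs_lt.mpr ⟨hy.1, hy.2⟩)
  have hsq : Real.sqrt (1+y^2) ^ 2 = 1+y^2 := Real.sq_sqrt (by positivity)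
  have hpos : (0:ℝ) < Real.sqrt (1+y^2) := Real.sqrt_pos.mpr (by positivity)
  set B := ∑' k, dd k * ((2*(k:ℝ)+1) * y^(2*k)) with hBdef
  field_simp
  linear_combination -hk - B * hsq

lemma step1 {x : ℝ} (hx : x ∈ Ioo (0:ℝ) 1) : Real.sqrt (1+x^2) * PP x = arsinh x := by
  have hsub : Icc (0:ℝ) x ⊆ Ioo (-1:ℝ) 1 := fun y hy =>
    ⟨by linarith [hy.1], lt_of_le_of_lt hy.2 hx.2⟩
  obtain ⟨c, _, hc0⟩ := exists_hasDerivAt_eq_slope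
    (fun z => Real.sqrt (1+z^2) * PP z - arsinh z) (fun _ => 0) hx.1
    (fun y hy => ((deriv_zero_step1 (hsub hy)).continuousAt).continuousWithinAt)
    (fun y hy => deriv_zero_step1 (hsub ⟨le_of_lt hy.1, le_of_lt hy.2⟩))
  have h0 : Real.sqrt (1+(0:ℝ)^2) * PP 0 - arsinh 0 = 0 := by
    simp [PP_zero, Real.arsinh_zero]
  rw [eq_comm, div_eq_iff (by linarith [hx.1] : x - 0 ≠ 0)] at hc0
  have := hc0
  simp only [h0, zero_mul, sub_zero] at this
  linarith [this]

lemma deriv_zero_step2 {y : ℝ} (hy : y ∈ Ioo (0:ℝ) 1) :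
    HasDerivAt (fun z => SS z - arsinh z ^ 2) 0 y := by
  have hy' : y ∈ Ioo (-1:ℝ) 1 := ⟨by linarith [hy.1], hy.2⟩
  have hS := hasDerivAt_SS hy'
  have ha := (Real.hasDerivAt_arsinh y).pow 2
  have h := hS.sub ha
  refine h.congr_deriv (Eq.symm ?_)
  have hSP : (∑' k, cc k * ((2*(k:ℝ)+2) * y^(2*k+1))) = 2 * PP y := by
    rw [PP, ← tsum_mul_left]
    refine tsum_congr fun k => ?_
    have := cc_dd k
    linear_combination y^(2*k+1) * this
  have h1 := step1 hy
  have hpos : (0:ℝ) < Real.sqrt (1+y^2) := Real.sqrt_pos.mpr (by positivity)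
  rw [hSP, ← h1]
  field_simp
  ring

lemma step2 {x : ℝ} (hx : x ∈ Ioo (0:ℝ) 1) : SS x = arsinh x ^ 2 := by
  have hsub : Icc (0:ℝ) x ⊆ Ioo (-1:ℝ) 1 := fun y hy =>
    ⟨by linarith [hy.1], lt_of_le_of_lt hy.2 hx.2⟩
  have hcont : ∀ y ∈ Icc (0:ℝ) x, ContinuousWithinAt (fun z => SS z - arsinh z ^ 2) (Icc 0 x) y := by
    intro y hy
    have hS := (hasDerivAt_SS (hsub hy)).continuousAt
    have : ContinuousAt (fun z => SS z - arsinh z ^ 2) y :=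
      hS.sub ((Real.continuous_arsinh.continuousAt).pow 2)
    exact this.continuousWithinAt
  obtain ⟨c, _, hc0⟩ := exists_hasDerivAt_eq_slope
    (fun z => SS z - arsinh z ^ 2) (fun _ => 0) hx.1 hcont
    (fun y hy => deriv_zero_step2 ⟨hy.1, lt_trans hy.2 hx.2⟩)
  have h0 : SS 0 - arsinh 0 ^ 2 = 0 := by simp [SS_zero, Real.arsinh_zero]
  rw [eq_comm, div_eq_iff (by linarith [hx.1] : x - 0 ≠ 0)] at hc0
  simp only [h0, zero_mul, sub_zero] at hc0
  linarith [hc0]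

lemma cos_pow_int (n : ℕ) : ∫ θ in (0:ℝ)..(π/2), Real.cos θ^(2*n) = (π/2) * Wal n := by
  induction n with
  | zero => simp [Wal]
  | succ k ih =>
    have h := integral_cos_pow (a:=0) (b:=π/2) (n:=2*k)
    have h2 : 2*(k+1) = 2*k+2 := by ring
    rw [h2, h, ih, Real.cos_pi_div_two, Real.sin_zero, Wal_succ]
    push_cast
    rw [zero_pow (by omega)]
    ring

lemma J_int (k : ℕ) :
    ∫ x in (0:ℝ)..1, x^(2*k+1) * arccos x = π * Wal (k+1) / (4*(k+1)) := by
  have hg : Continuous (fun x : ℝ => x^(2*k+1) * arccos x) :=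
    (continuous_pow _).mul Real.continuous_arccos
  have hsub := intervalIntegral.integral_comp_smul_deriv (a:=(0:ℝ)) (b:=π/2)
    (f := Real.cos) (f' := fun θ => -Real.sin θ)
    (g := fun x : ℝ => x^(2*k+1) * arccos x)
    (fun θ _ => Real.hasDerivAt_cos θ)
    (Real.continuous_sin.neg.continuousOn) hg
  rw [Real.cos_zero, Real.cos_pi_div_two] at hsub
  have e0 : (∫ x in (0:ℝ)..1, x^(2*k+1) * arccos x) =
      ∫ θ in (0:ℝ)..(π/2), Real.sin θ * (Real.cos θ^(2*k+1) * θ) := by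
    rw [intervalIntegral.integral_symm 1 0, ← hsub, ← intervalIntegral.integral_neg]
    refine intervalIntegral.integral_congr (fun θ hθ => ?_)
    have hθ' : θ ∈ Icc (0:ℝ) (π/2) := by
      rwa [uIcc_of_le (by positivity)] at hθ
    have harc : arccos (Real.cos θ) = θ :=
      Real.arccos_cos hθ'.1 (le_trans hθ'.2 (by linarith [Real.pi_pos]))
    simp only [smul_eq_mul, Function.comp]
    rw [harc]
    ring
  -- integration by parts
  have hv : ∀ θ ∈ uIcc (0:ℝ) (π/2), HasDerivAt
      (fun θ : ℝ => -Real.cos θ^(2*k+2) / (2*k+2))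
      (Real.cos θ^(2*k+1) * Real.sin θ) θ := by
    intro θ _
    have h1 : HasDerivAt (fun θ : ℝ => Real.cos θ^(2*k+2))
        (((2*k+2:ℕ):ℝ) * Real.cos θ^(2*k+1) * (-Real.sin θ)) θ := by
      have := (Real.hasDerivAt_cos θ).pow (2*k+2)
      exact this.congr_deriv (by rw [show 2*k+2-1 = 2*k+1 by omega])
    have h2 := h1.div_const (-(2*(k:ℝ)+2))
    have he : (fun θ : ℝ => Real.cos θ^(2*k+2) / -(2*(k:ℝ)+2)) =
        (fun θ : ℝ => -Real.cos θ^(2*k+2) / (2*(k:ℝ)+2)) := by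
      funext z; rw [div_neg, neg_div]
    rw [he] at h2
    refine h2.congr_deriv (Eq.symm ?_)
    have hne : (-(2*(k:ℝ)+2)) ≠ 0 := by
      have : (0:ℝ) < 2*(k:ℝ)+2 := by positivity
      linarith
    rw [eq_div_iff hne]
    push_cast
    ring
  have hibp := intervalIntegral.integral_mul_deriv_eq_deriv_mul
    (u := fun θ : ℝ => θ) (u' := fun _ => (1:ℝ))
    (v := fun θ : ℝ => -Real.cos θ^(2*k+2) / (2*k+2))
    (v' := fun θ : ℝ => Real.cos θ^(2*k+1) * Real.sin θ)
    (a := (0:ℝ)) (b := π/2)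
    (fun θ _ => hasDerivAt_id θ) hv
    (intervalIntegrable_const)
    (((Real.continuous_cos.pow _).mul Real.continuous_sin).intervalIntegrable _ _)
  rw [e0]
  have e1 : (∫ θ in (0:ℝ)..(π/2), Real.sin θ * (Real.cos θ^(2*k+1) * θ)) =
      ∫ θ in (0:ℝ)..(π/2), θ * (Real.cos θ^(2*k+1) * Real.sin θ) := by
    refine intervalIntegral.integral_congr (fun θ _ => ?_); ring
  rw [e1, hibp]
  simp only [Real.cos_pi_div_two, Real.cos_zero, one_pow, one_mul,
    zero_pow (show 2*k+2 ≠ 0 by omega), neg_zero, zero_div, mul_zero, zero_mul, sub_zero, zero_sub]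
  have e3 : (∫ θ in (0:ℝ)..(π/2), -Real.cos θ^(2*k+2) / (2*(k:ℝ)+2)) =
      (-1/(2*(k:ℝ)+2)) * ∫ θ in (0:ℝ)..(π/2), Real.cos θ^(2*(k+1)) := by
    rw [← intervalIntegral.integral_const_mul]
    refine intervalIntegral.integral_congr (fun θ _ => ?_)
    have h2 : 2*(k+1) = 2*k+2 := by ring
    rw [h2]
    ring
  rw [e3, cos_pow_int]
  have hne : (2*(k:ℝ)+2) ≠ 0 := by positivity
  have hne2 : (4*((k:ℝ)+1)) ≠ 0 := by positivity
  push_cast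
  field_simp
  ring

lemma cc_val (k : ℕ) : cc k * (π * Wal (k+1) / (4*((k:ℝ)+1))) = (π/8) * ((-1)^k / ((k:ℝ)+1)^3) := by
  have hW := Wal_pos (k+1)
  rw [cc]
  push_cast
  field_simp
  ring

lemma abs_cc (k : ℕ) : |cc k| = 1 / (2*((k:ℝ)+1)^2 * Wal (k+1)) := by
  have hW := Wal_pos (k+1)
  rw [cc, abs_div, abs_pow, abs_neg, abs_one, one_pow, abs_of_pos (by positivity)]

lemma summable_invcube : Summable (fun k : ℕ => (π/8) * (1 / ((k:ℝ)+1)^3)) := by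
  apply Summable.mul_left
  have h : Summable (fun n : ℕ => 1 / (n:ℝ)^3) := by
    rw [Real.summable_one_div_nat_pow]
    omega
  have := (summable_nat_add_iff 1).mpr h
  refine this.congr fun k => ?_
  push_cast
  ring

open Real in
theorem alt_cubes_sum_eq_arsinh_sq_integral :
    (π / 8) * ∑' n : ℕ, (-1 : ℝ) ^ n / (n + 1 : ℝ) ^ 3 =
      ∫ x in (0:ℝ)..1, (arsinh x) ^ 2 * arccos x / x := by
  have hle : (0:ℝ) ≤ 1 := by norm_num
  rw [intervalIntegral.integral_of_le hle]
  set F : ℕ → ℝ → ℝ := fun k x => cc k * (x^(2*k+1) * arccos x) with hF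
  -- pointwise identity on Ioc 0 1
  have hpt : ∀ x ∈ Ioc (0:ℝ) 1, (arsinh x)^2 * arccos x / x = ∑' k, F k x := by
    intro x hx
    rcases eq_or_lt_of_le hx.2 with h1 | h1
    · subst h1
      simp [hF, Real.arccos_one]
    · have hx' : x ∈ Ioo (0:ℝ) 1 := ⟨hx.1, h1⟩
      have hx0 : x ≠ 0 := ne_of_gt hx.1
      rw [← step2 hx', SS, div_eq_mul_inv, ← tsum_mul_right, ← tsum_mul_right]
      refine tsum_congr fun k => ?_
      rw [hF]
      have : x^(2*k+2) = x^(2*k+1) * x := pow_succ x _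
      rw [this]
      field_simp
  rw [setIntegral_congr_fun measurableSet_Ioc hpt]
  -- interchange
  have hint : ∀ k, Integrable (F k) (volume.restrict (Ioc (0:ℝ) 1)) := by
    intro k
    have hc : Continuous (F k) :=
      continuous_const.mul ((continuous_pow _).mul Real.continuous_arccos)
    exact (hc.integrableOn_Ioc (a := 0) (b := 1))
  have hnorm : ∀ k, ∫ x in Ioc (0:ℝ) 1, ‖F k x‖ = (π/8) * (1 / ((k:ℝ)+1)^3) := by
    intro k
    have he : ∀ x ∈ Ioc (0:ℝ) 1, ‖F k x‖ = |cc k| * (x^(2*k+1) * arccos x) := by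
      intro x hx
      have h1 : (0:ℝ) ≤ x^(2*k+1) := pow_nonneg (le_of_lt hx.1) _
      have h2 : (0:ℝ) ≤ arccos x := Real.arccos_nonneg x
      rw [hF, Real.norm_eq_abs, abs_mul, abs_of_nonneg (mul_nonneg h1 h2)]
    rw [setIntegral_congr_fun measurableSet_Ioc he, integral_const_mul,
      ← intervalIntegral.integral_of_le hle, J_int, abs_cc]
    have hW := Wal_pos (k+1)
    field_simp
    ring
  have hsum : Summable (fun k => ∫ x in Ioc (0:ℝ) 1, ‖F k x‖) := by
    refine summable_invcube.congr fun k => (hnorm k).symm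
  rw [← integral_tsum_of_summable_integral_norm hint hsum]
  -- compute each integral
  have hJ : ∀ k, ∫ x in Ioc (0:ℝ) 1, F k x = (π/8) * ((-1)^k / ((k:ℝ)+1)^3) := by
    intro k
    rw [hF]
    simp only
    rw [integral_const_mul, ← intervalIntegral.integral_of_le hle, J_int, cc_val]
  rw [tsum_congr hJ, tsum_mul_left]
end
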